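/- In the linear case, every efficient solution is properly efficient: if Γ = {w ∈ ℝⁿ : Aw ≤ b} is a nonempty polyhedron and f, p are linear functionals, then for every efficient point z of the bicriteria problem (min f, min p) over Γ there exists L̄ > 0 such that for all w ∈ Γ with f(w) < f(z) and p(w) > p(z), (f(z) - f(w))/(p(w) - p(z)) ≤ L̄, and symmetrically for all w ∈ Γ with p(w) < p(z) and f(w) > f(z), (p(z) - p(w))/(f(w) - f(z)) ≤ L̄. -/

import Mathlib

open Finset Topology
open scoped RealInnerProductSpace

variable {E : Type*} [NormedAddCommGroup E] [InnerProductSpace ℝ E] [FiniteDimensional ℝ E]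

/-- The cone generated by a finite family of vectors is closed. -/
theorem cone_isClosed_aux {ι : Type*} [Fintype ι] [DecidableEq ι] (v : ι → E) :
    ∀ (k : ℕ) (s : Finset ι), s.card = k →
      IsClosed {x : E | ∃ y : ι → ℝ, (∀ i, 0 ≤ y i) ∧ x = ∑ i ∈ s, y i • v i} := by
  intro k
  induction k using Nat.strong_induction_on with
  | _ k IH =>
    intro s hs
    by_cases hli : LinearIndependent ℝ (fun i : s => v i)
    · -- linearly independent generators: closed image of the nonneg orthant
      set φ : (s → ℝ) →ₗ[ℝ] E :=
        { toFun := fun y => ∑ i : s, y i • v i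
          map_add' := by intro y₁ y₂; simp [add_smul, Finset.sum_add_distrib]
          map_smul' := by intro c y; simp [smul_smul, Finset.smul_sum] } with hφ
      have hinj : Function.Injective φ := by
        rw [← LinearMap.ker_eq_bot, LinearMap.ker_eq_bot']
        intro y hy
        have := (Fintype.linearIndependent_iff.mp hli) y hy
        funext i; exact this i
      have hce : Topology.IsClosedEmbedding φ := LinearMap.isClosedEmbedding_of_injective
        (LinearMap.ker_eq_bot.mpr hinj)
      have hO : IsClosed {y : s → ℝ | ∀ i, 0 ≤ y i} := by
        have : {y : s → ℝ | ∀ i, 0 ≤ y i} = ⋂ i : s, {y | 0 ≤ y i} := by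
          ext y; simp [Set.mem_iInter]
        rw [this]
        exact isClosed_iInter fun i => isClosed_le continuous_const (continuous_apply i)
      have himg : {x : E | ∃ y : ι → ℝ, (∀ i, 0 ≤ y i) ∧ x = ∑ i ∈ s, y i • v i}
          = φ '' {y : s → ℝ | ∀ i, 0 ≤ y i} := by
        ext x
        constructor
        · rintro ⟨y, hy, rfl⟩
          refine ⟨fun i => y i, fun i => hy i, ?_⟩
          simp only [hφ, LinearMap.coe_mk, AddHom.coe_mk]
          show ∑ i : s, y i • v i = _
          rw [Finset.univ_eq_attach, Finset.sum_attach s (fun i => y i • v i)]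
        · rintro ⟨y, hy, rfl⟩
          refine ⟨fun i => if h : i ∈ s then y ⟨i, h⟩ else 0, ?_, ?_⟩
          · intro i; dsimp only; split
            · exact hy _
            · exact le_refl 0
          · simp only [hφ, LinearMap.coe_mk, AddHom.coe_mk]
            show ∑ i : s, y i • v i = _
            rw [← Finset.sum_attach s (fun i => (if h : i ∈ s then y ⟨i, h⟩ else 0) • v i),
              Finset.univ_eq_attach]
            refine Finset.sum_congr rfl fun i _ => ?_
            rw [dif_pos i.2]
      rw [himg]
      exact hce.isClosed_iff_image_isClosed.mp hO
    · -- dependent generators: the cone is a finite union of smaller cones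
      obtain ⟨g, hgsum, j₀, hj₀⟩ := Fintype.not_linearIndependent_iff.mp hli
      -- turn g into a coefficient function on ι with a negative value somewhere in s
      have key : ∃ c : ι → ℝ, (∀ i ∉ s, c i = 0) ∧ (∑ i ∈ s, c i • v i = 0) ∧
          ∃ i ∈ s, c i < 0 := by
        rcases lt_trichotomy (g j₀) 0 with hneg | hzero | hpos
        · refine ⟨fun i => if h : i ∈ s then g ⟨i, h⟩ else 0, fun i hi => dif_neg hi, ?_, ?_⟩
          · rw [← Finset.sum_attach s (fun i => (if h : i ∈ s then g ⟨i, h⟩ else 0) • v i)]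
            rw [← hgsum, Finset.univ_eq_attach]
            exact Finset.sum_congr rfl fun i _ => by rw [dif_pos i.2]
          · refine ⟨j₀, j₀.2, ?_⟩
            show (if h : (j₀:ι) ∈ s then g ⟨j₀, h⟩ else 0) < 0
            rw [dif_pos j₀.2]; exact hneg
        · exact absurd hzero hj₀
        · refine ⟨fun i => if h : i ∈ s then -g ⟨i, h⟩ else 0, fun i hi => dif_neg hi, ?_, ?_⟩
          · rw [← Finset.sum_attach s
              (fun i => (if h : i ∈ s then -g ⟨i, h⟩ else 0) • v i)]
            have : ∑ i ∈ s.attach, (if h : (i:ι) ∈ s then -g ⟨i, h⟩ else 0) • v (i:ι)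
                = ∑ i ∈ s.attach, -(g i • v (i:ι)) :=
              Finset.sum_congr rfl fun i _ => by rw [dif_pos i.2, neg_smul]
            rw [this, Finset.sum_neg_distrib, ← Finset.univ_eq_attach, hgsum, neg_zero]
          · refine ⟨j₀, j₀.2, ?_⟩
            show (if h : (j₀:ι) ∈ s then -g ⟨j₀, h⟩ else 0) < 0
            rw [dif_pos j₀.2]; simpa using hpos
      obtain ⟨c, hc0, hcsum, hcneg⟩ := key
      have hsne : s.Nonempty := hcneg.imp fun i hi => hi.1
      have hkpos : 0 < k := by rw [← hs]; exact Finset.card_pos.mpr hsne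
      -- show the cone equals a finite union over erased index sets
      have hunion : {x : E | ∃ y : ι → ℝ, (∀ i, 0 ≤ y i) ∧ x = ∑ i ∈ s, y i • v i}
          = ⋃ i ∈ s, {x : E | ∃ y : ι → ℝ, (∀ i, 0 ≤ y i) ∧ x = ∑ j ∈ s.erase i, y j • v j} := by
        ext x
        simp only [Set.mem_setOf_eq, Set.mem_iUnion]
        constructor
        · rintro ⟨y, hy, rfl⟩
          -- shift y along c until some coordinate with negative c hits zero
          set T : Finset ι := s.filter (fun i => c i < 0) with hT
          have hTne : T.Nonempty := by
            obtain ⟨i, hi, hci⟩ := hcneg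
            exact ⟨i, Finset.mem_filter.mpr ⟨hi, hci⟩⟩
          obtain ⟨i₀, hi₀T, hi₀min⟩ := Finset.exists_min_image T (fun i => y i / (-c i)) hTne
          have hi₀s : i₀ ∈ s := (Finset.mem_filter.mp hi₀T).1
          have hci₀ : c i₀ < 0 := (Finset.mem_filter.mp hi₀T).2
          set t : ℝ := y i₀ / (-c i₀) with ht
          have htnn : 0 ≤ t := div_nonneg (hy i₀) (by linarith)
          refine ⟨i₀, hi₀s, fun i => y i + t * c i, ?_, ?_⟩
          · intro i
            show 0 ≤ y i + t * c i
            by_cases his : i ∈ s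
            · by_cases hci : c i < 0
              · have := hi₀min i (Finset.mem_filter.mpr ⟨his, hci⟩)
                have h1 : t ≤ y i / (-c i) := this
                have h2 : t * (-c i) ≤ y i := by
                  rw [← le_div_iff₀ (by linarith : (0:ℝ) < -c i)]; exact h1
                nlinarith
              · push_neg at hci
                have := mul_nonneg htnn hci
                linarith [hy i]
            · rw [hc0 i his, mul_zero, add_zero]; exact hy i
          · have hzero : y i₀ + t * c i₀ = 0 := by
              have h1 : -c i₀ ≠ 0 := by linarith
              have h2 : t * c i₀ = -y i₀ := by
                rw [ht, div_mul_eq_mul_div, div_eq_iff h1]; ring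
              rw [h2]; ring
            have hsum : ∑ i ∈ s, (y i + t * c i) • v i = ∑ i ∈ s, y i • v i := by
              simp only [add_smul, Finset.sum_add_distrib]
              have : ∑ i ∈ s, (t * c i) • v i = t • ∑ i ∈ s, c i • v i := by
                rw [Finset.smul_sum]
                exact Finset.sum_congr rfl fun i _ => by rw [smul_smul]
              rw [this, hcsum, smul_zero, add_zero]
            rw [← hsum, ← Finset.add_sum_erase s _ hi₀s, hzero, zero_smul, zero_add]
        · rintro ⟨i, his, y, hy, rfl⟩
          refine ⟨Function.update y i 0, fun j => ?_, ?_⟩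
          · rcases eq_or_ne j i with rfl | hj
            · rw [Function.update_self]
            · rw [Function.update_of_ne hj]; exact hy j
          · rw [← Finset.add_sum_erase s _ his, Function.update_self, zero_smul, zero_add]
            exact (Finset.sum_congr rfl fun j hj =>
              by rw [Function.update_of_ne (Finset.ne_of_mem_erase hj)]).symm
      rw [hunion]
      refine Set.Finite.isClosed_biUnion (Finset.finite_toSet s) fun i his => ?_
      exact IH (k-1) (by omega) (s.erase i) (by rw [Finset.card_erase_of_mem his, hs])

/-- Farkas' lemma: if `⟪g, d⟫ ≥ 0` whenever `⟪N i, d⟫ ≤ 0` for all `i ∈ s`, then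
`g` is a nonnegative combination of the `-N i`. -/
theorem farkas_lemma [CompleteSpace E] {ι : Type*} [Fintype ι] [DecidableEq ι]
    (s : Finset ι) (N : ι → E) (g : E)
    (h : ∀ d : E, (∀ i ∈ s, ⟪N i, d⟫ ≤ 0) → 0 ≤ ⟪g, d⟫) :
    ∃ y : ι → ℝ, (∀ i, 0 ≤ y i) ∧ g = ∑ i ∈ s, y i • (-N i) := by
  set C : Set E := {x : E | ∃ y : ι → ℝ, (∀ i, 0 ≤ y i) ∧ x = ∑ i ∈ s, y i • (-N i)} with hC
  have hCclosed : IsClosed C := cone_isClosed_aux (fun i => -N i) s.card s rfl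
  have hCne : C.Nonempty := ⟨0, fun _ => 0, fun _ => le_refl 0, by simp⟩
  by_contra hg
  have hgC : g ∉ C := fun hmem => hg (by obtain ⟨y, hy, hgy⟩ := hmem; exact ⟨y, hy, hgy⟩)
  set K : ConvexCone ℝ E :=
    { carrier := C
      smul_mem' := by
        rintro c hc x ⟨y, hy, rfl⟩
        exact ⟨fun i => c * y i, fun i => mul_nonneg (le_of_lt hc) (hy i), by
          rw [Finset.smul_sum]; exact Finset.sum_congr rfl fun i _ => (smul_smul c (y i) _)⟩
      add_mem' := by
        rintro x ⟨y₁, hy₁, rfl⟩ x' ⟨y₂, hy₂, rfl⟩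
        exact ⟨fun i => y₁ i + y₂ i, fun i => add_nonneg (hy₁ i) (hy₂ i), by
          rw [← Finset.sum_add_distrib]
          exact Finset.sum_congr rfl fun i _ => (add_smul _ _ _).symm⟩ } with hK
  obtain ⟨d, hd1, hd2⟩ :=
    ProperCone.hyperplane_separation'
      (⟨K.toPointedCone (.of_nonempty_of_isClosed hCne hCclosed), hCclosed⟩ : ProperCone ℝ E) hgC
  have hneg : ∀ i ∈ s, ⟪N i, d⟫ ≤ 0 := by
    intro i hi
    have hmem : -N i ∈ K := by
      refine ⟨fun j => if j = i then 1 else 0, fun j => by positivity, ?_⟩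
      rw [Finset.sum_eq_single i (fun j _ hji => by simp [hji]) (fun hs' => absurd hi hs')]
      simp
    have := hd1 _ hmem
    rw [inner_neg_left] at this
    linarith
  have := h d hneg
  linarith

/-- If a linear objective has no improving recession direction over a polyhedron,
it is bounded below on the polyhedron. -/
theorem lp_bounded_below [CompleteSpace E] {ι : Type*} [Fintype ι] [DecidableEq ι]
    (s : Finset ι) (N : ι → E) (c : ι → ℝ) (g : E)
    (h : ¬ ∃ d : E, (∀ i ∈ s, ⟪N i, d⟫ ≤ 0) ∧ ⟪g, d⟫ < 0) :
    ∃ B : ℝ, ∀ x : E, (∀ i ∈ s, ⟪N i, x⟫ ≤ c i) → B ≤ ⟪g, x⟫ := by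
  push_neg at h
  obtain ⟨y, hy, hgy⟩ := farkas_lemma s N g h
  refine ⟨-∑ i ∈ s, y i * c i, fun x hx => ?_⟩
  have : ⟪g, x⟫ = -∑ i ∈ s, y i * ⟪N i, x⟫ := by
    rw [hgy, sum_inner, ← Finset.sum_neg_distrib]
    refine Finset.sum_congr rfl fun i _ => ?_
    rw [real_inner_smul_left, inner_neg_left]; ring
  rw [this, neg_le_neg_iff]
  exact Finset.sum_le_sum fun i hi => mul_le_mul_of_nonneg_left (hx i hi) (hy i)

/-- One-sided proper-efficiency bound for an efficient point of a bicriteria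
linear problem over a polyhedron, phrased with inner products. -/
theorem side_bound [CompleteSpace E] {m : ℕ} (a : Fin m → E) (b : Fin m → ℝ)
    (vf vp : E) (z : E) (hz : ∀ i, ⟪a i, z⟫ ≤ b i)
    (heff : ¬ ∃ w : E, (∀ i, ⟪a i, w⟫ ≤ b i) ∧ ⟪vf, w⟫ ≤ ⟪vf, z⟫ ∧ ⟪vp, w⟫ ≤ ⟪vp, z⟫ ∧
      (⟪vf, w⟫ < ⟪vf, z⟫ ∨ ⟪vp, w⟫ < ⟪vp, z⟫)) :
    ∃ L : ℝ, 0 < L ∧ ∀ w : E, (∀ i, ⟪a i, w⟫ ≤ b i) → ⟪vf, w⟫ < ⟪vf, z⟫ → ⟪vp, z⟫ < ⟪vp, w⟫ →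
      (⟪vf, z⟫ - ⟪vf, w⟫) / (⟪vp, w⟫ - ⟪vp, z⟫) ≤ L := by
  classical
  set I : Finset (Fin m) := Finset.univ.filter (fun i => ⟪a i, z⟫ = b i) with hI
  -- there is no feasible direction decreasing f while keeping p constant
  have hA : ¬ ∃ d : E, (∀ i ∈ I, ⟪a i, d⟫ ≤ 0) ∧ ⟪vp, d⟫ = 0 ∧ ⟪vf, d⟫ < 0 := by
    rintro ⟨d, hdI, hdp, hdf⟩
    set J : Finset (Fin m) := Finset.univ.filter (fun i => i ∉ I) with hJ
    set φ : Fin m → ℝ := fun i => (b i - ⟪a i, z⟫) / (1 + |⟪a i, d⟫|) with hφ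
    have hφpos : ∀ i ∈ J, 0 < φ i := by
      intro i hi
      have hiI : i ∉ I := (Finset.mem_filter.mp hi).2
      have : ⟪a i, z⟫ ≠ b i := fun h => hiI (Finset.mem_filter.mpr ⟨Finset.mem_univ i, h⟩)
      have h1 : ⟪a i, z⟫ < b i := lt_of_le_of_ne (hz i) this
      have h2 : (0:ℝ) < 1 + |⟪a i, d⟫| := by positivity
      exact div_pos (by linarith) h2
    set t : ℝ := if hJne : J.Nonempty then min 1 (J.inf' hJne φ) else 1 with ht
    have htpos : 0 < t := by
      rw [ht]; split
      · rename_i hJne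
        exact lt_min one_pos ((Finset.lt_inf'_iff hJne).mpr (fun i hi => hφpos i hi))
      · exact one_pos
    have htle : ∀ i ∈ J, t ≤ φ i := by
      intro i hi
      rw [ht]
      rw [dif_pos ⟨i, hi⟩]
      exact le_trans (min_le_right _ _) (Finset.inf'_le _ hi)
    have hwfeas : ∀ i, ⟪a i, z + t • d⟫ ≤ b i := by
      intro i
      rw [inner_add_right, real_inner_smul_right]
      by_cases hiI : i ∈ I
      · have hact : ⟪a i, z⟫ = b i := (Finset.mem_filter.mp hiI).2
        have := hdI i hiI
        nlinarith
      · have hiJ : i ∈ J := Finset.mem_filter.mpr ⟨Finset.mem_univ i, hiI⟩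
        have h2 : (0:ℝ) < 1 + |⟪a i, d⟫| := by positivity
        have h3 : t * ⟪a i, d⟫ ≤ t * (1 + |⟪a i, d⟫|) := by
          have : ⟪a i, d⟫ ≤ 1 + |⟪a i, d⟫| := by
            have := le_abs_self ⟪a i, d⟫; linarith
          exact mul_le_mul_of_nonneg_left this htpos.le
        have h4 : t * (1 + |⟪a i, d⟫|) ≤ φ i * (1 + |⟪a i, d⟫|) :=
          mul_le_mul_of_nonneg_right (htle i hiJ) h2.le
        have h5 : φ i * (1 + |⟪a i, d⟫|) = b i - ⟪a i, z⟫ := by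
          rw [hφ]; field_simp
        linarith
    refine heff ⟨z + t • d, hwfeas, ?_, ?_, Or.inl ?_⟩
    · rw [inner_add_right, real_inner_smul_right]; nlinarith
    · rw [inner_add_right, real_inner_smul_right, hdp]; simp
    · rw [inner_add_right, real_inner_smul_right]; nlinarith
  -- Farkas/LP-boundedness applied to the normalized feasible-direction polyhedron
  set N : Sum (Fin m) Bool → E := Sum.elim a (fun bb => if bb then vp else -vp) with hN
  set cc : Sum (Fin m) Bool → ℝ := Sum.elim (fun _ => 0) (fun bb => if bb then 1 else -1)
    with hcc
  set s : Finset (Sum (Fin m) Bool) :=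
    I.image Sum.inl ∪ {Sum.inr true, Sum.inr false} with hs
  have hnorec : ¬ ∃ d : E, (∀ i ∈ s, ⟪N i, d⟫ ≤ 0) ∧ ⟪vf, d⟫ < 0 := by
    rintro ⟨d, hd, hdf⟩
    refine hA ⟨d, ?_, ?_, hdf⟩
    · intro i hi
      exact hd (Sum.inl i) (Finset.mem_union_left _ (Finset.mem_image_of_mem _ hi))
    · have h1 := hd (Sum.inr true) (Finset.mem_union_right _ (by simp))
      have h2 := hd (Sum.inr false) (Finset.mem_union_right _ (by simp))
      simp only [hN, Sum.elim_inr] at h1 h2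
      norm_num at h1 h2
      linarith
  obtain ⟨B, hB⟩ := lp_bounded_below s N cc vf hnorec
  refine ⟨max (-B) 1, lt_of_lt_of_le one_pos (le_max_right _ _), ?_⟩
  intro w hw hf hp
  set δ : ℝ := ⟪vp, w⟫ - ⟪vp, z⟫ with hδ
  have hδpos : 0 < δ := by rw [hδ]; linarith
  have hx := hB (δ⁻¹ • (w - z)) ?_
  · rw [real_inner_smul_right, inner_sub_right] at hx
    rw [div_le_iff₀ hδpos]
    have h3 : δ⁻¹ * (⟪vf, w⟫ - ⟪vf, z⟫) * δ = ⟪vf, w⟫ - ⟪vf, z⟫ := by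
      field_simp
    have h4 : B * δ ≤ ⟪vf, w⟫ - ⟪vf, z⟫ := by
      calc B * δ ≤ δ⁻¹ * (⟪vf, w⟫ - ⟪vf, z⟫) * δ :=
            mul_le_mul_of_nonneg_right hx hδpos.le
        _ = _ := h3
    have h5 : -B ≤ max (-B) 1 := le_max_left _ _
    nlinarith
  · intro i hi
    rw [hs] at hi
    rcases Finset.mem_union.mp hi with hi1 | hi2
    · obtain ⟨j, hj, rfl⟩ := Finset.mem_image.mp hi1
      have hact : ⟪a j, z⟫ = b j := (Finset.mem_filter.mp hj).2
      simp only [hN, hcc, Sum.elim_inl]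
      rw [real_inner_smul_right, inner_sub_right]
      have h6 : ⟪a j, w⟫ - ⟪a j, z⟫ ≤ 0 := by rw [hact]; linarith [hw j]
      have := mul_nonneg (le_of_lt (inv_pos.mpr hδpos)) (neg_nonneg.mpr h6)
      nlinarith
    · have h7 : δ⁻¹ * δ = 1 := inv_mul_cancel₀ (ne_of_gt hδpos)
      rcases Finset.mem_insert.mp hi2 with rfl | hi3
      · simp only [hN, hcc, Sum.elim_inr, if_pos]
        rw [real_inner_smul_right, inner_sub_right, ← hδ, h7]
      · rw [Finset.mem_singleton] at hi3
        subst hi3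
        simp only [hN, hcc, Sum.elim_inr, Bool.false_eq_true, if_neg, ite_false]
        rw [inner_neg_left, real_inner_smul_right, inner_sub_right, ← hδ, h7]

/-- In the linear case every efficient solution is properly efficient: for a
nonempty polyhedron `Γ = {w : A·w ≤ b}` and linear objectives `f, p`, every
efficient point of the bicriteria problem `(min f, min p)` has bounded
trade-offs. -/
theorem linear_efficient_is_properly_efficient {n m : ℕ}
    (A : Matrix (Fin m) (Fin n) ℝ) (b : Fin m → ℝ)
    (f p : (Fin n → ℝ) →ₗ[ℝ] ℝ)
    (Γ : Set (Fin n → ℝ)) (hΓdef : Γ = {w | A.mulVec w ≤ b})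
    (hΓne : Γ.Nonempty) (z : Fin n → ℝ) (hz : z ∈ Γ)
    (heff : ¬ ∃ w ∈ Γ, f w ≤ f z ∧ p w ≤ p z ∧ (f w < f z ∨ p w < p z)) :
    ∃ Lbar : ℝ, 0 < Lbar ∧
      (∀ w ∈ Γ, f w < f z → p z < p w →
        (f z - f w) / (p w - p z) ≤ Lbar) ∧
      (∀ w ∈ Γ, p w < p z → f z < f w →
        (p z - p w) / (f w - f z) ≤ Lbar) := by
  classical
  set ι : (Fin n → ℝ) → EuclideanSpace ℝ (Fin n) := ⇑(EuclideanSpace.equiv (Fin n) ℝ).symm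
    with hι
  have hinner : ∀ u x : Fin n → ℝ, ⟪ι u, ι x⟫ = ∑ j, u j * x j := by
    intro u x
    rw [PiLp.inner_apply]
    simp [hι, EuclideanSpace.equiv, RCLike.inner_apply,
      conj_trivial]
    exact Finset.sum_congr rfl fun j _ => mul_comm _ _
  set a : Fin m → EuclideanSpace ℝ (Fin n) := fun i => ι (A i) with ha
  set vf := ι (fun j => f (Pi.single j 1)) with hvf
  set vp := ι (fun j => p (Pi.single j 1)) with hvp
  have hrep : ∀ (g : (Fin n → ℝ) →ₗ[ℝ] ℝ) (x : Fin n → ℝ),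
      ⟪ι (fun j => g (Pi.single j 1)), ι x⟫ = g x := by
    intro g x
    rw [hinner]
    conv_rhs => rw [← Finset.univ_sum_single x, map_sum]
    refine Finset.sum_congr rfl fun j _ => ?_
    have h1 : (Pi.single j (x j) : Fin n → ℝ) = x j • (Pi.single j 1 : Fin n → ℝ) := by
      rw [← Pi.single_smul, smul_eq_mul, mul_one]
    rw [h1, map_smul, smul_eq_mul]; ring
  have hfv : ∀ x : Fin n → ℝ, ⟪vf, ι x⟫ = f x := fun x => hrep f x
  have hpv : ∀ x : Fin n → ℝ, ⟪vp, ι x⟫ = p x := fun x => hrep p x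
  have hfeas : ∀ w : Fin n → ℝ, w ∈ Γ ↔ ∀ i, ⟪a i, ι w⟫ ≤ b i := by
    intro w
    rw [hΓdef]
    simp only [Set.mem_setOf_eq, Pi.le_def]
    have h2 : ∀ i, ⟪a i, ι w⟫ = A.mulVec w i := by
      intro i
      rw [ha, hinner]
      simp [Matrix.mulVec, dotProduct]
    exact ⟨fun h i => by rw [h2 i]; exact h i, fun h i => by rw [← h2 i]; exact h i⟩
  have hzfeas : ∀ i, ⟪a i, ι z⟫ ≤ b i := (hfeas z).mp hz
  have heff1 : ¬ ∃ wE : EuclideanSpace ℝ (Fin n), (∀ i, ⟪a i, wE⟫ ≤ b i) ∧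
      ⟪vf, wE⟫ ≤ ⟪vf, ι z⟫ ∧ ⟪vp, wE⟫ ≤ ⟪vp, ι z⟫ ∧
      (⟪vf, wE⟫ < ⟪vf, ι z⟫ ∨ ⟪vp, wE⟫ < ⟪vp, ι z⟫) := by
    rintro ⟨wE, h1, h2, h3, h4⟩
    set w : Fin n → ℝ := (EuclideanSpace.equiv (Fin n) ℝ) wE with hw
    have hiw : ι w = wE := (EuclideanSpace.equiv (Fin n) ℝ).symm_apply_apply wE
    rw [← hiw] at h1 h2 h3 h4
    rw [hfv, hfv] at h2
    rw [hpv, hpv] at h3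
    rw [hfv, hfv, hpv, hpv] at h4
    exact heff ⟨w, (hfeas w).mpr h1, h2, h3, h4⟩
  have heff2 : ¬ ∃ wE : EuclideanSpace ℝ (Fin n), (∀ i, ⟪a i, wE⟫ ≤ b i) ∧
      ⟪vp, wE⟫ ≤ ⟪vp, ι z⟫ ∧ ⟪vf, wE⟫ ≤ ⟪vf, ι z⟫ ∧
      (⟪vp, wE⟫ < ⟪vp, ι z⟫ ∨ ⟪vf, wE⟫ < ⟪vf, ι z⟫) := by
    rintro ⟨wE, h1, h2, h3, h4⟩
    exact heff1 ⟨wE, h1, h3, h2, h4.symm⟩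
  obtain ⟨L1, hL1pos, hL1⟩ := side_bound a b vf vp (ι z) hzfeas heff1
  obtain ⟨L2, hL2pos, hL2⟩ := side_bound a b vp vf (ι z) hzfeas heff2
  refine ⟨max L1 L2, lt_of_lt_of_le hL1pos (le_max_left _ _), ?_, ?_⟩
  · intro w hw hf hp
    have := hL1 (ι w) ((hfeas w).mp hw) (by rw [hfv, hfv]; exact hf) (by rw [hpv, hpv]; exact hp)
    rw [hfv, hfv, hpv, hpv] at this
    exact le_trans this (le_max_left _ _)
  · intro w hw hp hf
    have := hL2 (ι w) ((hfeas w).mp hw) (by rw [hpv, hpv]; exact hp) (by rw [hfv, hfv]; exact hf)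
    rw [hfv, hfv, hpv, hpv] at this
    exact le_trans this (le_max_right _ _)
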